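/- Every u ∈ ℋ can be represented over the minimal Martin space: (i) u_i = sup_{w ∈ ℳᵐ} (μ_u(w) + w_i) for all i ∈ S; (ii) any ν : ℳᵐ → ℝ ∪ {−∞} with u_i = sup_{w ∈ ℳᵐ} (ν(w) + w_i) for all i satisfies sup_{w ∈ ℳᵐ} ν(w) < +∞ and ν(w) ≤ μ_u(w) for all w ∈ ℳᵐ (so μ_u is the maximal representing map); (iii) conversely, for any ν : ℳᵐ → ℝ ∪ {−∞} with sup_{w ∈ ℳᵐ} ν(w) < +∞, the vector defined by u_i = sup_{w ∈ ℳᵐ} (ν(w) + w_i) belongs to ℋ. -/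

import Mathlib

open Filter Topology

noncomputable section

namespace MaxPlus

variable {S : Type*}

/-- Weight of the path `p 0, p 1, ..., p n` for the kernel `A`. -/
def pathWeight (A : S → S → EReal) (p : ℕ → S) (n : ℕ) : EReal :=
  ∑ k ∈ Finset.range n, A (p k) (p (k + 1))

/-- The max-plus star kernel `A*`: supremum of weights of paths of length `≥ 0`. -/
def star (A : S → S → EReal) (i j : S) : EReal :=
  ⨆ (n : ℕ) (p : ℕ → S) (_ : p 0 = i ∧ p n = j), pathWeight A p n

/-- The max-plus kernel `A⁺`: supremum of weights of paths of length `≥ 1`. -/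
def plus (A : S → S → EReal) (i j : S) : EReal :=
  ⨆ (n : ℕ) (_ : 1 ≤ n) (p : ℕ → S) (_ : p 0 = i ∧ p n = j), pathWeight A p n

/-- `π` is a left super-harmonic row vector (with full support, being real valued). -/
def LeftSuperharmonic (A : S → S → EReal) (π : S → ℝ) : Prop :=
  ∀ j, (⨆ i, ((π i : EReal) + A i j)) ≤ (π j : EReal)

/-- The Martin kernel `K_{ij} = A*_{ij} - π_j`. -/
def K (A : S → S → EReal) (π : S → ℝ) (i j : S) : EReal :=
  star A i j - (π j : EReal)

/-- `K♭_{ij} = A⁺_{ij} - π_j`. -/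
def Kflat (A : S → S → EReal) (π : S → ℝ) (i j : S) : EReal :=
  plus A i j - (π j : EReal)

/-- The set `𝒦` of columns of the Martin kernel. -/
def kerCols (A : S → S → EReal) (π : S → ℝ) : Set (S → EReal) :=
  Set.range fun j => fun i => K A π i j

/-- The Martin space `ℳ`: closure of `𝒦` in the product topology. -/
def martin (A : S → S → EReal) (π : S → ℝ) : Set (S → EReal) :=
  closure (kerCols A π)

/-- `μ_u(w)`: the limsup of `π_j + u_j` as `K_{·j} → w`. -/
def mu (A : S → S → EReal) (π : S → ℝ) (u : S → EReal) (w : S → EReal) : EReal :=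
  ⨅ (W : Set (S → EReal)) (_ : W ∈ 𝓝 w),
    ⨆ (j : S) (_ : (fun i => K A π i j) ∈ W), ((π j : EReal) + u j)

/-- `w♭_i`: the liminf of `K♭_{ij}` as `K_{·j} → w`. -/
def flat (A : S → S → EReal) (π : S → ℝ) (w : S → EReal) (i : S) : EReal :=
  ⨆ (W : Set (S → EReal)) (_ : W ∈ 𝓝 w),
    ⨅ (j : S) (_ : (fun i' => K A π i' j) ∈ W), Kflat A π i j

/-- The kernel `H(z,w) = μ_w(z)`. -/
def H (A : S → S → EReal) (π : S → ℝ) (z w : S → EReal) : EReal := mu A π w z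

/-- The kernel `H♭(z,w) = μ_{w♭}(z)`. -/
def Hflat (A : S → S → EReal) (π : S → ℝ) (z w : S → EReal) : EReal :=
  mu A π (flat A π w) z

/-- The minimal Martin space `ℳᵐ = {w ∈ ℳ : H♭(w,w) = 0}`. -/
def martinMin (A : S → S → EReal) (π : S → ℝ) : Set (S → EReal) :=
  {w | w ∈ martin A π ∧ Hflat A π w w = 0}

/-- The maximal circuit mean `ρ(A)`. -/
def maxCircuitMean (A : S → S → EReal) : EReal :=
  ⨆ (k : ℕ) (_ : 1 ≤ k) (p : ℕ → S) (_ : p k = p 0),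
    (((k : ℝ)⁻¹ : ℝ) : EReal) * pathWeight A p k

/-- `α`-almost-geodesic with respect to the left super-harmonic vector `π`. -/
def IsAlmostGeodesic (A : S → S → EReal) (π : S → ℝ) (x : ℕ → S) : Prop :=
  ∃ α : ℝ, 0 ≤ α ∧ ∀ k : ℕ,
    (π (x k) : EReal) ≤ (α : EReal) + (π (x 0) : EReal) + pathWeight A x k

/-- The set `𝒮` of `π`-integrable super-harmonic vectors. -/
def Sset (A : S → S → EReal) (π : S → ℝ) : Set (S → EReal) :=
  {u | (∀ i, u i ≠ ⊤) ∧ (∀ i, (⨆ j, A i j + u j) ≤ u i) ∧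
    (⨆ j, ((π j : EReal) + u j)) < ⊤}

/-- The set `ℋ` of `π`-integrable harmonic vectors. -/
def Hset (A : S → S → EReal) (π : S → ℝ) : Set (S → EReal) :=
  {u | (∀ i, u i ≠ ⊤) ∧ (∀ i, (⨆ j, A i j + u j) = u i) ∧
    (⨆ j, ((π j : EReal) + u j)) < ⊤}

/-- A vector is normalised if `sup_j (π_j + u_j) = 0`. -/
def Normalised (π : S → ℝ) (u : S → EReal) : Prop :=
  (⨆ j, ((π j : EReal) + u j)) = 0

/-- `ξ` is an extremal generator of `V`. -/
def ExtremalGen (V : Set (S → EReal)) (ξ : S → EReal) : Prop :=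
  ξ ∈ V ∧ ξ ≠ (fun _ => (⊥ : EReal)) ∧
    ∀ u v, u ∈ V → v ∈ V → ξ = (fun i => u i ⊔ v i) → ξ = u ∨ ξ = v

end MaxPlus
namespace MaxPlus

section Aux

variable {S : Type*} {A : S → S → EReal} {π : S → ℝ}

variable {S : Type*}

theorem ereal_add_iSup {ι : Sort*} (c : EReal) (f : ι → EReal) :
    c + ⨆ i, f i = ⨆ i, c + f i := by
  refine le_antisymm ?_ (iSup_le fun i => add_le_add_right (le_iSup f i) c)
  refine EReal.add_le_of_forall_lt fun a' ha' b' hb' => ?_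
  rcases lt_iSup_iff.1 hb' with ⟨i, hi⟩
  exact le_trans (add_le_add ha'.le hi.le) (le_iSup (fun i => c + f i) i)

theorem ereal_iSup_add {ι : Sort*} (c : EReal) (f : ι → EReal) :
    (⨆ i, f i) + c = ⨆ i, f i + c := by
  rw [add_comm, ereal_add_iSup]; simp [add_comm]

theorem pathWeight_zero (A : S → S → EReal) (p : ℕ → S) : pathWeight A p 0 = 0 := by
  simp [pathWeight]

theorem pathWeight_succ (A : S → S → EReal) (p : ℕ → S) (n : ℕ) :
    pathWeight A p (n + 1) = pathWeight A p n + A (p n) (p (n + 1)) := by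
  simp [pathWeight, Finset.sum_range_succ]

theorem pathWeight_succ' (A : S → S → EReal) (p : ℕ → S) (n : ℕ) :
    pathWeight A p (n + 1) = A (p 0) (p 1) + pathWeight A (fun t => p (t + 1)) n := by
  simp [pathWeight, Finset.sum_range_succ', add_comm]

variable {A : S → S → EReal} {π : S → ℝ}

theorem le_star (n : ℕ) (p : ℕ → S) (h0 : p 0 = i) (hn : p n = j) :
    pathWeight A p n ≤ star A i j := by
  refine le_trans ?_ (le_iSup _ n)
  refine le_trans ?_ (le_iSup _ p)
  exact le_iSup (fun _ : p 0 = i ∧ p n = j => pathWeight A p n) ⟨h0, hn⟩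

theorem le_plus (n : ℕ) (hn1 : 1 ≤ n) (p : ℕ → S) (h0 : p 0 = i) (hn : p n = j) :
    pathWeight A p n ≤ plus A i j := by
  refine le_trans ?_ (le_iSup _ n)
  refine le_trans ?_ (le_iSup _ hn1)
  refine le_trans ?_ (le_iSup _ p)
  exact le_iSup (fun _ : p 0 = i ∧ p n = j => pathWeight A p n) ⟨h0, hn⟩

theorem star_le {c : EReal}
    (h : ∀ (n : ℕ) (p : ℕ → S), p 0 = i → p n = j → pathWeight A p n ≤ c) :
    star A i j ≤ c :=
  iSup_le fun n => iSup_le fun p => iSup_le fun hp => h n p hp.1 hp.2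

theorem plus_le {c : EReal}
    (h : ∀ (n : ℕ), 1 ≤ n → ∀ (p : ℕ → S), p 0 = i → p n = j → pathWeight A p n ≤ c) :
    plus A i j ≤ c :=
  iSup_le fun n => iSup_le fun hn => iSup_le fun p => iSup_le fun hp => h n hn p hp.1 hp.2

theorem plus_le_star : plus A i j ≤ star A i j :=
  plus_le fun n _ p h0 hn => le_star n p h0 hn

theorem star_self_nonneg : (0 : EReal) ≤ star A i i := by
  have := le_star (A := A) 0 (fun _ => i) rfl rfl
  simpa [pathWeight_zero] using this

/-- concatenation -/

def cat (p : ℕ → S) (m : ℕ) (q : ℕ → S) : ℕ → S := fun t => if t < m then p t else q (t - m)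

theorem cat_right {p q : ℕ → S} {m k : ℕ} (h : m ≤ k) : cat p m q k = q (k - m) :=
  if_neg (not_lt.2 h)

theorem cat_zero {p q : ℕ → S} {m : ℕ} (hpq : p m = q 0) : cat p m q 0 = p 0 := by
  rcases Nat.eq_zero_or_pos m with h | h
  · rw [cat_right (by omega)]; subst h; exact hpq.symm
  · exact if_pos h

theorem cat_end {p q : ℕ → S} {m n : ℕ} : cat p m q (m + n) = q n := by
  rw [cat_right (by omega)]; congr 1; omega

theorem pathWeight_cat {p q : ℕ → S} {m n : ℕ} (hpq : p m = q 0) :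
    pathWeight A (cat p m q) (m + n) = pathWeight A p m + pathWeight A q n := by
  have hbase : ∀ k < m, A (cat p m q k) (cat p m q (k+1)) = A (p k) (p (k+1)) := by
    intro k hk
    have h1 : cat p m q k = p k := if_pos hk
    have h2 : cat p m q (k+1) = p (k+1) := by
      rcases lt_or_eq_of_le (Nat.succ_le_of_lt hk) with h | h
      · exact if_pos h
      · rw [cat_right (by omega), show k + 1 - m = 0 by omega, ← hpq, ← h]
    rw [h1, h2]
  induction n with
  | zero =>
    simp only [Nat.add_zero, pathWeight_zero, add_zero]
    exact Finset.sum_congr rfl fun k hk => hbase k (Finset.mem_range.1 hk)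
  | succ n ih =>
    have h2 : cat p m q (m + n + 1) = q (n + 1) := by
      rw [cat_right (by omega)]; congr 1; omega
    rw [show m + (n+1) = (m+n) + 1 from rfl, pathWeight_succ, ih, h2,
      pathWeight_succ, add_assoc, cat_end]

theorem lt_star {c : EReal} {i j : S} (h : c < star A i j) :
    ∃ n p, p 0 = i ∧ p n = j ∧ c < pathWeight A p n := by
  rw [star, lt_iSup_iff] at h
  obtain ⟨n, h⟩ := h
  rw [lt_iSup_iff] at h
  obtain ⟨p, h⟩ := h
  rw [lt_iSup_iff] at h
  obtain ⟨hp, h⟩ := h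
  exact ⟨n, p, hp.1, hp.2, h⟩

theorem lt_plus {c : EReal} {i j : S} (h : c < plus A i j) :
    ∃ n, 1 ≤ n ∧ ∃ p, p 0 = i ∧ p n = j ∧ c < pathWeight A p n := by
  rw [plus, lt_iSup_iff] at h
  obtain ⟨n, h⟩ := h
  rw [lt_iSup_iff] at h
  obtain ⟨hn, h⟩ := h
  rw [lt_iSup_iff] at h
  obtain ⟨p, h⟩ := h
  rw [lt_iSup_iff] at h
  obtain ⟨hp, h⟩ := h
  exact ⟨n, hn, p, hp.1, hp.2, h⟩

theorem star_add_star_le {i k j : S} : star A i k + star A k j ≤ star A i j := by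
  refine EReal.add_le_of_forall_lt fun a ha b hb => ?_
  obtain ⟨m, p, hp0, hpm, hap⟩ := lt_star ha
  obtain ⟨n, q, hq0, hqn, hbq⟩ := lt_star hb
  calc a + b ≤ pathWeight A p m + pathWeight A q n := add_le_add hap.le hbq.le
    _ = pathWeight A (cat p m q) (m + n) := (pathWeight_cat (hpm.trans hq0.symm)).symm
    _ ≤ star A i j := le_star _ _ (by rw [cat_zero (hpm.trans hq0.symm), hp0])
        (by rw [cat_end, hqn])

theorem star_add_plus_le {i k j : S} : star A i k + plus A k j ≤ plus A i j := by
  refine EReal.add_le_of_forall_lt fun a ha b hb => ?_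
  obtain ⟨m, p, hp0, hpm, hap⟩ := lt_star ha
  obtain ⟨n, hn1, q, hq0, hqn, hbq⟩ := lt_plus hb
  calc a + b ≤ pathWeight A p m + pathWeight A q n := add_le_add hap.le hbq.le
    _ = pathWeight A (cat p m q) (m + n) := (pathWeight_cat (hpm.trans hq0.symm)).symm
    _ ≤ plus A i j := le_plus _ (by omega) _ (by rw [cat_zero (hpm.trans hq0.symm), hp0])
        (by rw [cat_end, hqn])

theorem plus_add_star_le {i k j : S} : plus A i k + star A k j ≤ plus A i j := by
  refine EReal.add_le_of_forall_lt fun a ha b hb => ?_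
  obtain ⟨m, hm1, p, hp0, hpm, hap⟩ := lt_plus ha
  obtain ⟨n, q, hq0, hqn, hbq⟩ := lt_star hb
  calc a + b ≤ pathWeight A p m + pathWeight A q n := add_le_add hap.le hbq.le
    _ = pathWeight A (cat p m q) (m + n) := (pathWeight_cat (hpm.trans hq0.symm)).symm
    _ ≤ plus A i j := le_plus _ (by omega) _ (by rw [cat_zero (hpm.trans hq0.symm), hp0])
        (by rw [cat_end, hqn])

theorem single_edge (i k : S) : A i k ≤ plus A i k := by
  have := le_plus (A := A) (i := i) (j := k) 1 le_rfl (fun t => if t = 0 then i else k)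
    (by simp) (by simp)
  simpa [pathWeight] using this

theorem plus_eq (i j : S) : plus A i j = ⨆ k, A i k + star A k j := by
  refine le_antisymm ?_ (iSup_le fun k =>
    le_trans (add_le_add_left (single_edge i k) _) plus_add_star_le)
  refine plus_le fun n hn1 p h0 hn => ?_
  obtain ⟨m, rfl⟩ : ∃ m, n = m + 1 := ⟨n - 1, by omega⟩
  rw [pathWeight_succ']
  refine le_trans (add_le_add_right (le_star m (fun t => p (t+1)) rfl hn) _) ?_
  rw [h0]
  show A i (p 1) + star A (p 1) j ≤ ⨆ k, A i k + star A k j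
  exact le_iSup (fun k => A i k + star A k j) (p 1)

theorem ereal_sub_add_add (a b : EReal) (c : ℝ) : (a - (c : EReal)) + ((c : EReal) + b) = a + b := by
  rw [sub_eq_add_neg, add_assoc, ← add_assoc (-(c : EReal)), ← EReal.coe_neg, ← EReal.coe_add,
    neg_add_cancel, EReal.coe_zero, zero_add]

theorem ereal_add_sub (a b : EReal) (c : ℝ) : a + (b - (c : EReal)) = (a + b) - (c : EReal) := by
  rw [sub_eq_add_neg, sub_eq_add_neg, add_assoc]

theorem pi_add_pathWeight_le (hπ : LeftSuperharmonic A π) (p : ℕ → S) (n : ℕ) :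
    (π (p 0) : EReal) + pathWeight A p n ≤ (π (p n) : EReal) := by
  induction n with
  | zero => simp [pathWeight_zero]
  | succ n ih =>
    rw [pathWeight_succ, ← add_assoc]
    calc (π (p 0) : EReal) + pathWeight A p n + A (p n) (p (n+1))
        ≤ (π (p n) : EReal) + A (p n) (p (n+1)) := add_le_add_left ih _
      _ ≤ _ := le_trans (le_iSup (fun i => (π i : EReal) + A i (p (n+1))) (p n)) (hπ (p (n+1)))

theorem star_le_pi (hπ : LeftSuperharmonic A π) (i j : S) :
    star A i j ≤ ((π j - π i : ℝ) : EReal) := by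
  refine star_le fun n p h0 hn => ?_
  have h := pi_add_pathWeight_le hπ p n
  rw [h0, hn] at h
  rw [EReal.coe_sub]
  exact (EReal.le_sub_iff_add_le (Or.inl (EReal.coe_ne_bot _))
    (Or.inl (EReal.coe_ne_top _))).2 (by rwa [add_comm])

theorem star_ne_top (hπ : LeftSuperharmonic A π) (i j : S) : star A i j ≠ ⊤ :=
  ((star_le_pi hπ i j).trans_lt (EReal.coe_lt_top _)).ne

theorem K_le_neg_pi (hπ : LeftSuperharmonic A π) (i j : S) :
    K A π i j ≤ ((-π i : ℝ) : EReal) := by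
  have := EReal.sub_le_sub (star_le_pi hπ i j) (le_refl ((π j : ℝ) : EReal))
  calc K A π i j ≤ ((π j - π i : ℝ) : EReal) - ((π j : ℝ) : EReal) := this
    _ = ((π j - π i - π j : ℝ) : EReal) := by rw [← EReal.coe_sub]
    _ = ((-π i : ℝ) : EReal) := by norm_num

theorem K_ne_top (hπ : LeftSuperharmonic A π) (i j : S) : K A π i j ≠ ⊤ :=
  ((K_le_neg_pi hπ i j).trans_lt (EReal.coe_lt_top _)).ne

theorem Kflat_le_K (i j : S) : Kflat A π i j ≤ K A π i j :=
  EReal.sub_le_sub plus_le_star le_rfl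

theorem Kflat_ne_top (hπ : LeftSuperharmonic A π) (i j : S) : Kflat A π i j ≠ ⊤ :=
  (lt_of_le_of_lt (le_trans (Kflat_le_K i j) (K_le_neg_pi hπ i j)) (EReal.coe_lt_top _)).ne

theorem Kflat_eq (i j : S) : Kflat A π i j = ⨆ k, A i k + K A π k j := by
  rw [Kflat, plus_eq, sub_eq_add_neg, ereal_iSup_add]
  refine iSup_congr fun k => ?_
  rw [K, sub_eq_add_neg, add_assoc]

theorem A_add_K_le_Kflat (i k j : S) : A i k + K A π k j ≤ Kflat A π i j := by
  rw [Kflat_eq]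
  exact le_iSup (fun k => A i k + K A π k j) k

theorem K_add_Kflat (i k j : S) :
    K A π i k + ((π k : EReal) + Kflat A π k j) ≤ Kflat A π i j := by
  rw [K, ereal_sub_add_add, Kflat, ereal_add_sub, Kflat]
  exact EReal.sub_le_sub star_add_plus_le le_rfl

theorem superharmonic_path {u : S → EReal} (h : ∀ i, (⨆ j, A i j + u j) ≤ u i)
    (p : ℕ → S) (n : ℕ) : pathWeight A p n + u (p n) ≤ u (p 0) := by
  induction n with
  | zero => simp [pathWeight_zero]
  | succ n ih =>
    rw [pathWeight_succ, add_assoc]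
    calc pathWeight A p n + (A (p n) (p (n+1)) + u (p (n+1)))
        ≤ pathWeight A p n + u (p n) :=
          add_le_add_right (le_trans (le_iSup (fun j => A (p n) j + u j) (p (n+1))) (h (p n))) _
      _ ≤ u (p 0) := ih

theorem star_add_le_of_superharmonic {u : S → EReal} (h : ∀ i, (⨆ j, A i j + u j) ≤ u i)
    (i j : S) : star A i j + u j ≤ u i := by
  refine EReal.add_le_of_forall_lt fun a ha b hb => ?_
  obtain ⟨n, p, hp0, hpn, hap⟩ := lt_star ha
  calc a + b ≤ pathWeight A p n + u (p n) := by rw [hpn]; exact add_le_add hap.le hb.le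
    _ ≤ u i := hp0 ▸ superharmonic_path h p n

theorem K_add_le_of_superharmonic {u : S → EReal} (h : ∀ i, (⨆ j, A i j + u j) ≤ u i)
    (i j : S) : K A π i j + (((π j : ℝ) : EReal) + u j) ≤ u i := by
  rw [K, ereal_sub_add_add]
  exact star_add_le_of_superharmonic h i j

theorem plus_add_le_of_superharmonic {u : S → EReal} (h : ∀ i, (⨆ j, A i j + u j) ≤ u i)
    (i j : S) : plus A i j + u j ≤ u i :=
  le_trans (add_le_add_left plus_le_star _) (star_add_le_of_superharmonic h i j)

theorem Kflat_add_le_of_superharmonic {u : S → EReal} (h : ∀ i, (⨆ j, A i j + u j) ≤ u i)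
    (i j : S) : Kflat A π i j + (((π j : ℝ) : EReal) + u j) ≤ u i := by
  rw [Kflat, ereal_sub_add_add]
  exact plus_add_le_of_superharmonic h i j

theorem exists_col_mem {w : S → EReal} (hw : w ∈ martin A π) {W : Set (S → EReal)}
    (hW : W ∈ 𝓝 w) : ∃ j, (fun i => K A π i j) ∈ W := by
  rcases mem_closure_iff_nhds.1 hw W hW with ⟨v, hvW, j, hj⟩
  refine ⟨j, ?_⟩
  have hj' : (fun i => K A π i j) = v := hj
  rw [hj']
  exact hvW

theorem continuous_const_add_apply {c : EReal} (hc : c ≠ ⊤) (k : S) :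
    Continuous fun v : S → EReal => c + v k := by
  induction c with
  | bot => simpa [EReal.bot_add] using continuous_const (y := (⊥ : EReal))
  | coe r =>
    have h1 : Continuous fun x : EReal => (r : EReal) + x := by
      rw [continuous_iff_continuousAt]
      intro x
      exact (EReal.continuousAt_add (p := ((r : EReal), x))
        (Or.inl (EReal.coe_ne_top r)) (Or.inl (EReal.coe_ne_bot r))).comp
        ((continuous_const.prodMk continuous_id).continuousAt)
    exact h1.comp (continuous_apply k)
  | top => exact absurd rfl hc

theorem martin_le_neg_pi (hπ : LeftSuperharmonic A π) {w : S → EReal}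
    (hw : w ∈ martin A π) (i : S) : w i ≤ ((-π i : ℝ) : EReal) := by
  have : martin A π ⊆ {v : S → EReal | v i ≤ ((-π i : ℝ) : EReal)} := by
    refine closure_minimal ?_ (isClosed_le (continuous_apply i) continuous_const)
    rintro v ⟨j, rfl⟩
    exact K_le_neg_pi hπ i j
  exact this hw

theorem martin_ne_top (hπ : LeftSuperharmonic A π) {w : S → EReal}
    (hw : w ∈ martin A π) (i : S) : w i ≠ ⊤ :=
  ((martin_le_neg_pi hπ hw i).trans_lt (EReal.coe_lt_top _)).ne

theorem martin_pi_add_nonpos (hπ : LeftSuperharmonic A π) {w : S → EReal}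
    (hw : w ∈ martin A π) (i : S) : ((π i : ℝ) : EReal) + w i ≤ 0 := by
  calc ((π i : ℝ) : EReal) + w i ≤ (π i : ℝ) + ((-π i : ℝ) : EReal) :=
        add_le_add_right (martin_le_neg_pi hπ hw i) _
    _ = 0 := by rw [← EReal.coe_add]; norm_num

theorem martin_superharmonic (hA : ∀ i j, A i j ≠ ⊤) {w : S → EReal}
    (hw : w ∈ martin A π) (i : S) : (⨆ k, A i k + w k) ≤ w i := by
  refine iSup_le fun k => ?_
  have : martin A π ⊆ {v : S → EReal | A i k + v k ≤ v i} := by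
    refine closure_minimal ?_
      (isClosed_le (continuous_const_add_apply (hA i k) k) (continuous_apply i))
    rintro v ⟨j, rfl⟩
    exact le_trans (A_add_K_le_Kflat i k j) (Kflat_le_K i j)
  exact this hw

theorem mu_le {u w : S → EReal} {W : Set (S → EReal)} (hW : W ∈ 𝓝 w) :
    mu A π u w ≤ ⨆ (j : S) (_ : (fun i => K A π i j) ∈ W), ((π j : EReal) + u j) :=
  iInf₂_le W hW

theorem mu_le_iSup {u w : S → EReal} : mu A π u w ≤ ⨆ j, ((π j : EReal) + u j) := by
  exact le_trans (mu_le (univ_mem)) (iSup_le fun j => iSup_le fun _ =>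
    le_iSup (fun j => ((π j : EReal) + u j)) j)

theorem le_flat {w : S → EReal} {W : Set (S → EReal)} (hW : W ∈ 𝓝 w) (i : S) :
    (⨅ (j : S) (_ : (fun i' => K A π i' j) ∈ W), Kflat A π i j) ≤ flat A π w i :=
  le_iSup₂ (f := fun W _ => ⨅ (j : S) (_ : (fun i' => K A π i' j) ∈ W), Kflat A π i j) W hW

theorem flat_le (hπ : LeftSuperharmonic A π) {w : S → EReal} (hw : w ∈ martin A π) (i : S) :
    flat A π w i ≤ w i := by
  by_contra hcon
  rcases EReal.lt_iff_exists_real_btwn.1 (not_le.1 hcon) with ⟨r, hwr, hrf⟩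
  rcases lt_iSup_iff.1 hrf with ⟨W, hW⟩
  rcases lt_iSup_iff.1 hW with ⟨hWnhds, hrW⟩
  have hW' : W ∩ {v : S → EReal | v i < (r : EReal)} ∈ 𝓝 w :=
    Filter.inter_mem hWnhds
      ((isOpen_lt (continuous_apply i) continuous_const).mem_nhds hwr)
  obtain ⟨j, hj⟩ := exists_col_mem hw hW'
  have hji : K A π i j < (r : EReal) := hj.2
  have : (r : EReal) < Kflat A π i j :=
    lt_of_lt_of_le hrW (iInf₂_le (f := fun j _ => Kflat A π i j) j hj.1)
  exact absurd (this.trans_le ((Kflat_le_K i j).trans hji.le)) (lt_irrefl _)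

theorem rep_le {u w : S → EReal} (hsh : ∀ i, (⨆ j, A i j + u j) ≤ u i) (i : S) :
    mu A π u w + flat A π w i ≤ u i := by
  refine EReal.add_le_of_forall_lt fun a ha b hb => ?_
  rcases lt_iSup_iff.1 hb with ⟨W, hW⟩
  rcases lt_iSup_iff.1 hW with ⟨hWn, hbW⟩
  have haW := ha.trans_le (mu_le hWn)
  rcases lt_iSup_iff.1 haW with ⟨j, hj⟩
  rcases lt_iSup_iff.1 hj with ⟨hjW, haj⟩
  calc a + b
      ≤ ((π j : EReal) + u j) + ⨅ (j' : S) (_ : (fun i' => K A π i' j') ∈ W), Kflat A π i j' :=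
        add_le_add haj.le hbW.le
    _ ≤ ((π j : EReal) + u j) + Kflat A π i j :=
        add_le_add_right (iInf₂_le (f := fun j' _ => Kflat A π i j') j hjW) _
    _ ≤ u i := by rw [add_comm]; exact Kflat_add_le_of_superharmonic hsh i j

theorem K_add_flat_le {w : S → EReal} (i k : S) :
    K A π i k + (((π k : ℝ) : EReal) + flat A π w k) ≤ flat A π w i := by
  refine EReal.add_le_of_forall_lt fun a ha b hb => ?_
  have hb' : b - ((π k : ℝ) : EReal) < flat A π w k := EReal.sub_lt_of_lt_add' hb
  rcases lt_iSup_iff.1 hb' with ⟨W, hW⟩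
  rcases lt_iSup_iff.1 hW with ⟨hWn, hbW⟩
  have hbk : b ≤ (⨅ (j : S) (_ : (fun i' => K A π i' j) ∈ W), Kflat A π k j) + (π k : EReal) := by
    calc b = b - ((π k : ℝ) : EReal) + ((π k : ℝ) : EReal) := by rw [EReal.sub_add_cancel]
      _ ≤ _ := add_le_add_left hbW.le _
  calc a + b ≤ K A π i k +
        ((⨅ (j : S) (_ : (fun i' => K A π i' j) ∈ W), Kflat A π k j) + (π k : EReal)) :=
        add_le_add ha.le hbk
    _ ≤ ⨅ (j : S) (_ : (fun i' => K A π i' j) ∈ W), Kflat A π i j := by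
        refine le_iInf fun j => le_iInf fun hj => ?_
        calc K A π i k +
              ((⨅ (j' : S) (_ : (fun i' => K A π i' j') ∈ W), Kflat A π k j') + (π k : EReal))
            ≤ K A π i k + (Kflat A π k j + (π k : EReal)) :=
              add_le_add_right (add_le_add_left
                (iInf₂_le (f := fun j' _ => Kflat A π k j') j hj) _) _
          _ = K A π i k + ((π k : EReal) + Kflat A π k j) := by rw [add_comm (Kflat A π k j)]
          _ ≤ Kflat A π i j := K_add_Kflat i k j
    _ ≤ flat A π w i := le_flat hWn i

theorem zero_le_mu_sup {w : S → EReal} (hw : w ∈ martinMin A π) {W : Set (S → EReal)}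
    (hW : W ∈ 𝓝 w) :
    (0 : EReal) ≤ ⨆ (j : S) (_ : (fun i => K A π i j) ∈ W), ((π j : EReal) + flat A π w j) := by
  have h := mu_le (A := A) (π := π) (u := flat A π w) (w := w) hW
  rw [show mu A π (flat A π w) w = Hflat A π w w from rfl, hw.2] at h
  exact h

theorem w_le_flat {w : S → EReal} (hw : w ∈ martinMin A π) (i : S) :
    w i ≤ flat A π w i := by
  by_contra hcon
  rcases EReal.lt_iff_exists_real_btwn.1 (not_le.1 hcon) with ⟨r, hfr, hrw⟩
  rcases EReal.lt_iff_exists_real_btwn.1 hfr with ⟨s, hfs, hsr⟩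
  have hWn : {v : S → EReal | (r : EReal) < v i} ∈ 𝓝 w :=
    (isOpen_lt continuous_const (continuous_apply i)).mem_nhds hrw
  have h0 := zero_le_mu_sup hw hWn
  have hsr' : ((s - r : ℝ) : EReal) < 0 := by
    rw [← EReal.coe_zero, EReal.coe_lt_coe_iff]
    have := EReal.coe_lt_coe_iff.1 hsr
    linarith
  rcases lt_iSup_iff.1 (hsr'.trans_le h0) with ⟨j, hj⟩
  rcases lt_iSup_iff.1 hj with ⟨hjW, hsj⟩
  have h1 : (r : EReal) < K A π i j := hjW
  have h2 : (s : EReal) ≤ flat A π w i := by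
    calc (s : EReal) = ((r + (s - r) : ℝ) : EReal) := by norm_num
      _ = (r : EReal) + ((s - r : ℝ) : EReal) := EReal.coe_add _ _
      _ ≤ K A π i j + ((π j : EReal) + flat A π w j) := add_le_add h1.le hsj.le
      _ ≤ flat A π w i := K_add_flat_le i j
  exact absurd (h2.trans_lt hfs) (lt_irrefl _)

theorem martinMin_flat_eq (hπ : LeftSuperharmonic A π) {w : S → EReal}
    (hw : w ∈ martinMin A π) (i : S) : flat A π w i = w i :=
  le_antisymm (flat_le hπ hw.1 i) (w_le_flat hw i)

theorem martinMin_harmonic (hπ : LeftSuperharmonic A π) (hA : ∀ i j, A i j ≠ ⊤)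
    {w : S → EReal} (hw : w ∈ martinMin A π) (i : S) : (⨆ k, A i k + w k) = w i := by
  refine le_antisymm (martin_superharmonic hA hw.1 i) ?_
  by_contra hcon
  rcases EReal.lt_iff_exists_real_btwn.1 (not_le.1 hcon) with ⟨r, hsupr, hrw⟩
  rcases EReal.lt_iff_exists_real_btwn.1 hsupr with ⟨s, hsups, hsr⟩
  have hrf : (r : EReal) < flat A π w i := (martinMin_flat_eq hπ hw i).symm ▸ hrw
  rcases lt_iSup_iff.1 hrf with ⟨W1, hW1⟩
  rcases lt_iSup_iff.1 hW1 with ⟨hW1n, hrW1⟩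
  have h0 := zero_le_mu_sup hw hW1n
  have hsr' : ((s - r : ℝ) : EReal) < 0 := by
    rw [← EReal.coe_zero, EReal.coe_lt_coe_iff]
    have := EReal.coe_lt_coe_iff.1 hsr
    linarith
  rcases lt_iSup_iff.1 (hsr'.trans_le h0) with ⟨j, hj⟩
  rcases lt_iSup_iff.1 hj with ⟨hjW, hsj⟩
  have h1 : (r : EReal) < Kflat A π i j :=
    lt_of_lt_of_le hrW1 (iInf₂_le (f := fun j' _ => Kflat A π i j') j hjW)
  have h2 : ((s - r : ℝ) : EReal) < (π j : EReal) + w j :=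
    lt_of_lt_of_le hsj (add_le_add_right (flat_le hπ hw.1 j) _)
  have h3 : Kflat A π i j + ((π j : EReal) + w j) ≤ ⨆ k, A i k + w k := by
    rw [Kflat_eq, ereal_iSup_add]
    refine iSup_le fun k => ?_
    refine le_trans ?_ (le_iSup (fun k => A i k + w k) k)
    rw [add_assoc]
    exact add_le_add_right
      (K_add_le_of_superharmonic (fun i' => martin_superharmonic hA hw.1 i') k j) _
  have h4 : (s : EReal) ≤ ⨆ k, A i k + w k := by
    calc (s : EReal) = ((r + (s - r) : ℝ) : EReal) := by norm_num
      _ = (r : EReal) + ((s - r : ℝ) : EReal) := EReal.coe_add _ _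
      _ ≤ Kflat A π i j + ((π j : EReal) + w j) := add_le_add h1.le h2.le
      _ ≤ _ := h3
  exact absurd (h4.trans_lt hsups) (lt_irrefl _)

theorem sup_pi_w_nonneg (hπ : LeftSuperharmonic A π) {w : S → EReal} (hw : w ∈ martinMin A π)
    {W : Set (S → EReal)} (hW : W ∈ 𝓝 w) :
    (0 : EReal) ≤ ⨆ (j : S) (_ : (fun i => K A π i j) ∈ W), ((π j : EReal) + w j) := by
  refine le_trans (zero_le_mu_sup hw hW) ?_
  exact iSup_mono fun j => iSup_mono fun _ => add_le_add_right (flat_le hπ hw.1 j) _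

theorem nu_le_mu (hπ : LeftSuperharmonic A π) {u : S → EReal} {ν : (S → EReal) → EReal}
    (hrep : ∀ i, u i = ⨆ w ∈ martinMin A π, (ν w + w i))
    {w0 : S → EReal} (hw0 : w0 ∈ martinMin A π) : ν w0 ≤ mu A π u w0 := by
  refine le_iInf fun W => le_iInf fun hW => ?_
  calc ν w0 = ν w0 + (0 : EReal) := (add_zero _).symm
    _ ≤ ν w0 + ⨆ (j : S) (_ : (fun i => K A π i j) ∈ W), ((π j : EReal) + w0 j) :=
        add_le_add_right (sup_pi_w_nonneg hπ hw0 hW) _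
    _ = ⨆ (j : S) (_ : (fun i => K A π i j) ∈ W), (ν w0 + ((π j : EReal) + w0 j)) := by
        rw [ereal_add_iSup]
        exact iSup_congr fun j => ereal_add_iSup _ _
    _ ≤ ⨆ (j : S) (_ : (fun i => K A π i j) ∈ W), ((π j : EReal) + u j) := by
        refine iSup_mono fun j => iSup_mono fun _ => ?_
        rw [← add_assoc, add_comm (ν w0) ((π j : EReal)), add_assoc]
        refine add_le_add_right ?_ _
        rw [hrep j]
        exact le_iSup₂ (f := fun w _ => ν w + w j) w0 hw0
    _ = _ := rfl

theorem rep_harmonic (hπ : LeftSuperharmonic A π) (hA : ∀ i j, A i j ≠ ⊤)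
    {ν : (S → EReal) → EReal} (hνtop : (⨆ w ∈ martinMin A π, ν w) < ⊤) :
    (fun i => ⨆ w ∈ martinMin A π, (ν w + w i)) ∈ Hset A π := by
  refine ⟨fun i => ?_, fun i => ?_, ?_⟩
  · have h1 : (⨆ w ∈ martinMin A π, (ν w + w i)) ≤
        (⨆ w ∈ martinMin A π, ν w) + ((-π i : ℝ) : EReal) := by
      refine iSup₂_le fun w hw => ?_
      exact add_le_add (le_iSup₂ (f := fun w _ => ν w) w hw) (martin_le_neg_pi hπ hw.1 i)
    exact (h1.trans_lt (EReal.add_lt_top hνtop.ne (EReal.coe_ne_top _))).ne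
  · calc (⨆ j, A i j + ⨆ w ∈ martinMin A π, (ν w + w j))
        = ⨆ j, ⨆ w ∈ martinMin A π, (A i j + (ν w + w j)) := by
          refine iSup_congr fun j => ?_
          rw [ereal_add_iSup]
          exact iSup_congr fun w => ereal_add_iSup _ _
      _ = ⨆ w ∈ martinMin A π, ⨆ j, (A i j + (ν w + w j)) := by
          rw [iSup_comm]
          exact iSup_congr fun w => iSup_comm
      _ = ⨆ w ∈ martinMin A π, (ν w + w i) := by
          refine iSup_congr fun w => iSup_congr fun hw => ?_
          calc (⨆ j, A i j + (ν w + w j)) = ⨆ j, (ν w + (A i j + w j)) := by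
                refine iSup_congr fun j => ?_
                rw [← add_assoc, add_comm (A i j) (ν w), add_assoc]
            _ = ν w + ⨆ j, (A i j + w j) := (ereal_add_iSup _ _).symm
            _ = ν w + w i := by rw [martinMin_harmonic hπ hA hw i]
  · refine lt_of_le_of_lt (iSup_le fun j => ?_) hνtop
    calc (π j : EReal) + ⨆ w ∈ martinMin A π, (ν w + w j)
        = ⨆ w ∈ martinMin A π, ((π j : EReal) + (ν w + w j)) := by
          rw [ereal_add_iSup]
          exact iSup_congr fun w => ereal_add_iSup _ _
      _ ≤ ⨆ w ∈ martinMin A π, ν w := by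
          refine iSup_mono fun w => iSup_mono fun hw => ?_
          calc (π j : EReal) + (ν w + w j) = ν w + ((π j : EReal) + w j) := by
                rw [← add_assoc, add_comm ((π j : EReal)) (ν w), add_assoc]
            _ ≤ ν w + 0 := add_le_add_right (martin_pi_add_nonpos hπ hw.1 j) _
            _ = ν w := add_zero _

theorem pathWeight_add (A : S → S → EReal) (p : ℕ → S) (k m : ℕ) :
    pathWeight A p k + pathWeight A (fun t => p (t + k)) m = pathWeight A p (k + m) := by
  induction m with
  | zero => simp [pathWeight_zero]
  | succ m ih =>
    rw [pathWeight_succ, ← add_assoc, ih, show k + (m + 1) = (k + m) + 1 from rfl,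
      pathWeight_succ, Nat.add_comm m k, show m + 1 + k = (k + m) + 1 by omega]

theorem ereal_sub_coe_add_coe (a : EReal) (r s : ℝ) :
    (a - (r : EReal)) + (s : EReal) = a + ((s - r : ℝ) : EReal) := by
  rw [sub_eq_add_neg, add_assoc, ← EReal.coe_neg, ← EReal.coe_add]
  congr 2
  ring

theorem ereal_coe_cancel (a : EReal) (r : ℝ) (b : EReal) (h : (r : EReal) + b = a) :
    b = a - (r : EReal) := by
  rw [← h, add_comm, EReal.add_sub_cancel_right]

theorem neg_pi_le_K (i : S) : ((-π i : ℝ) : EReal) ≤ K A π i i := by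
  have h := EReal.sub_le_sub (star_self_nonneg (A := A) (i := i)) (le_refl ((π i : ℝ) : EReal))
  calc ((-π i : ℝ) : EReal) = ((0 - π i : ℝ) : EReal) := by norm_num
    _ = (0 : EReal) - (π i : EReal) := by rw [EReal.coe_sub, EReal.coe_zero]
    _ ≤ K A π i i := by rw [K]; exact h

theorem ereal_add_coe_add_coe (a : EReal) (r s : ℝ) :
    (a + (r : EReal)) + (s : EReal) = a + ((r + s : ℝ) : EReal) := by
  rw [add_assoc, ← EReal.coe_add]

theorem geodesic_limit (hπ : LeftSuperharmonic A π) {x : ℕ → S} {α : ℝ}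
    (hgeo : ∀ k, (π (x k) : EReal) ≤ ((α : EReal) + (π (x 0) : EReal)) + pathWeight A x k) :
    ∃ w ∈ martinMin A π, ∃ b : ℝ,
      (∀ i k, K A π i (x k) +
        ((π (x k) - π (x 0) - (pathWeight A x k).toReal - b : ℝ) : EReal) ≤ w i) ∧
      (∀ W ∈ 𝓝 w, ∀ δ : ℝ, 0 < δ → ∃ k, (fun i => K A π i (x k)) ∈ W ∧
        b - δ ≤ π (x k) - π (x 0) - (pathWeight A x k).toReal) := by
  classical
  -- path weights are real
  set c : ℕ → ℝ := fun k => (pathWeight A x k).toReal with hc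
  have hpw : ∀ k, pathWeight A x k = ((c k : ℝ) : EReal) := by
    intro k
    have hnb : pathWeight A x k ≠ ⊥ := by
      intro h
      have := hgeo k
      rw [h, EReal.add_bot] at this
      exact EReal.coe_ne_bot _ (le_bot_iff.1 this)
    have hnt : pathWeight A x k ≠ ⊤ := by
      intro h
      have h2 := pi_add_pathWeight_le hπ x k
      rw [h, EReal.add_top_of_ne_bot (EReal.coe_ne_bot _)] at h2
      exact EReal.coe_ne_top _ (top_le_iff.1 h2)
    exact (EReal.coe_toReal hnt hnb).symm
  -- shifted path weights
  have hshift : ∀ k l, k ≤ l →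
      pathWeight A (fun t => x (t + k)) (l - k) = ((c l - c k : ℝ) : EReal) := by
    intro k l hkl
    have h := pathWeight_add A x k (l - k)
    rw [show k + (l - k) = l by omega, hpw k, hpw l] at h
    rw [show pathWeight A (fun t => x (t + k)) (l - k)
        = ((c l : ℝ) : EReal) - ((c k : ℝ) : EReal) from ereal_coe_cancel _ _ _ h,
      ← EReal.coe_sub]
  -- β
  set β : ℕ → ℝ := fun k => π (x k) - π (x 0) - c k with hβ
  have hβ0 : β 0 = 0 := by
    simp [hβ, hc, pathWeight_zero]
  have hβα : ∀ k, β k ≤ α := by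
    intro k
    have h := hgeo k
    rw [hpw k, ← EReal.coe_add, ← EReal.coe_add, EReal.coe_le_coe_iff] at h
    simp only [hβ]
    linarith
  have hβnn : ∀ k, 0 ≤ β k := by
    intro k
    have h := pi_add_pathWeight_le hπ x k
    rw [hpw k, ← EReal.coe_add, EReal.coe_le_coe_iff] at h
    simp only [hβ]
    linarith
  have hAedge : ∀ k, A (x k) (x (k + 1)) = ((c (k + 1) - c k : ℝ) : EReal) := by
    intro k
    have h := pathWeight_succ A x k
    rw [hpw k, hpw (k + 1)] at h
    rw [show A (x k) (x (k+1)) = ((c (k+1) : ℝ) : EReal) - ((c k : ℝ) : EReal) from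
      ereal_coe_cancel _ _ _ h.symm, ← EReal.coe_sub]
  have hβmono : Monotone β := by
    refine monotone_nat_of_le_succ fun k => ?_
    have hedge : (π (x k) : EReal) + A (x k) (x (k + 1)) ≤ (π (x (k + 1)) : EReal) :=
      le_trans (le_iSup (fun i => (π i : EReal) + A i (x (k + 1))) (x k)) (hπ (x (k + 1)))
    rw [hAedge k, ← EReal.coe_add, EReal.coe_le_coe_iff] at hedge
    simp only [hβ]
    linarith
  -- star bound along the path
  have hstar2 : ∀ k l, k ≤ l → ((c l - c k : ℝ) : EReal) ≤ star A (x k) (x l) := by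
    intro k l hkl
    rw [← hshift k l hkl]
    exact le_star (l - k) _ (by simp) (show x (l - k + k) = x l by congr 1; omega)
  -- key monotonicity
  have hkey : ∀ (i : S) k l, k ≤ l →
      K A π i (x k) + ((β k : ℝ) : EReal) ≤ K A π i (x l) + ((β l : ℝ) : EReal) := by
    intro i k l hkl
    rw [K, K, ereal_sub_coe_add_coe, ereal_sub_coe_add_coe]
    have h1 : star A i (x k) + ((c l - c k : ℝ) : EReal) ≤ star A i (x l) :=
      le_trans (add_le_add_right (hstar2 k l hkl) _) star_add_star_le
    calc star A i (x k) + ((β k - π (x k) : ℝ) : EReal)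
        = star A i (x k) + (((c l - c k) + (β l - π (x l)) : ℝ) : EReal) := by
          congr 2
          simp only [hβ]
          ring
      _ = (star A i (x k) + ((c l - c k : ℝ) : EReal)) + ((β l - π (x l) : ℝ) : EReal) := by
          rw [add_assoc, ← EReal.coe_add]
      _ ≤ star A i (x l) + ((β l - π (x l) : ℝ) : EReal) := add_le_add_left h1 _
  -- limit of β
  have hbdd : BddAbove (Set.range β) := ⟨α, by rintro r ⟨k, rfl⟩; exact hβα k⟩
  set b : ℝ := ⨆ k, β k with hb
  have hβleb : ∀ k, β k ≤ b := fun k => le_ciSup hbdd k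
  have hβnear : ∀ δ : ℝ, 0 < δ → ∃ k0, ∀ k ≥ k0, b - δ ≤ β k := by
    intro δ hδ
    by_contra hcon
    push_neg at hcon
    have : ∀ k, β k < b - δ := by
      intro k
      rcases hcon k with ⟨l, hl, hlt⟩
      exact lt_of_le_of_lt (hβmono hl) hlt
    have : b ≤ b - δ := ciSup_le fun k => (this k).le
    linarith
  -- limit of the columns
  set g : S → ℕ → EReal := fun i k => K A π i (x k) + ((β k : ℝ) : EReal) with hg
  have hgmono : ∀ i, Monotone (g i) := fun i k l hkl => hkey i k l hkl
  set G : S → EReal := fun i => ⨆ k, g i k with hG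
  have hGtop : ∀ i, G i ≠ ⊤ := by
    intro i
    have : G i ≤ (((-π i) + α : ℝ) : EReal) := by
      refine iSup_le fun k => ?_
      rw [EReal.coe_add]
      exact add_le_add (K_le_neg_pi hπ i (x k)) (EReal.coe_le_coe_iff.2 (hβα k))
    exact (this.trans_lt (EReal.coe_lt_top _)).ne
  set w : S → EReal := fun i => G i + ((-b : ℝ) : EReal) with hw
  have hwge : ∀ i k, K A π i (x k) + ((β k - b : ℝ) : EReal) ≤ w i := by
    intro i k
    calc K A π i (x k) + ((β k - b : ℝ) : EReal)
        = (K A π i (x k) + ((β k : ℝ) : EReal)) + ((-b : ℝ) : EReal) := by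
          rw [ereal_add_coe_add_coe, sub_eq_add_neg]
      _ ≤ w i := add_le_add_left (le_iSup (g i) k) _
  have hwtend : ∀ i, Filter.Tendsto (fun k => K A π i (x k)) atTop (𝓝 (w i)) := by
    intro i
    have h1 : Filter.Tendsto (g i) atTop (𝓝 (G i)) := tendsto_atTop_iSup (hgmono i)
    have h2 : Filter.Tendsto (fun k => ((-β k : ℝ) : EReal)) atTop (𝓝 ((-b : ℝ) : EReal)) := by
      rw [EReal.tendsto_coe]
      exact (tendsto_atTop_ciSup hβmono hbdd).neg
    have h3 : ContinuousAt (fun p : EReal × EReal => p.1 + p.2) (G i, ((-b : ℝ) : EReal)) :=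
      EReal.continuousAt_add (Or.inl (hGtop i)) (Or.inr (EReal.coe_ne_top _))
    have h4 := h3.tendsto.comp (h1.prodMk_nhds h2)
    have h5 : (fun k => g i k + ((-β k : ℝ) : EReal)) = fun k => K A π i (x k) := by
      funext k
      simp only [hg]
      rw [ereal_add_coe_add_coe, add_neg_cancel, EReal.coe_zero, add_zero]
    rw [show w i = G i + ((-b : ℝ) : EReal) from rfl]
    have h6 : Filter.Tendsto (fun k => g i k + ((-β k : ℝ) : EReal)) atTop
        (𝓝 (G i + ((-b : ℝ) : EReal))) := h4
    rwa [h5] at h6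
  have hcoltend : Filter.Tendsto (fun k => fun i => K A π i (x k)) atTop (𝓝 w) :=
    tendsto_pi_nhds.2 hwtend
  have hwmartin : w ∈ martin A π :=
    mem_closure_of_tendsto hcoltend (Filter.Eventually.of_forall fun k => ⟨x k, rfl⟩)
  -- w is in the minimal Martin space
  have hwbot : ∀ k, ((-π (x k) + (β k - b) : ℝ) : EReal) ≤ w (x k) := by
    intro k
    calc ((-π (x k) + (β k - b) : ℝ) : EReal)
        = ((-π (x k) : ℝ) : EReal) + ((β k - b : ℝ) : EReal) := EReal.coe_add _ _
      _ ≤ K A π (x k) (x k) + ((β k - b : ℝ) : EReal) := add_le_add_left (neg_pi_le_K _) _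
      _ ≤ w (x k) := hwge _ k
  have hwmin : w ∈ martinMin A π := by
    refine ⟨hwmartin, le_antisymm ?_ ?_⟩
    · refine le_trans mu_le_iSup (iSup_le fun j => ?_)
      exact le_trans (add_le_add_right (flat_le hπ hwmartin j) _)
        (martin_pi_add_nonpos hπ hwmartin j)
    · rw [Hflat, mu]
      refine le_iInf fun W => le_iInf fun hW => ?_
      by_contra hcon
      rcases EReal.lt_iff_exists_real_btwn.1 (not_le.1 hcon) with ⟨r, hsupr, hr0⟩
      have hr0' : r < 0 := by
        rw [← EReal.coe_zero, EReal.coe_lt_coe_iff] at hr0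
        exact hr0
      set δ : ℝ := -r / 2 with hδdef
      have hδ : 0 < δ := by simp only [hδdef]; linarith
      obtain ⟨k0, hk0⟩ := hβnear δ hδ
      obtain ⟨N, hN⟩ := Filter.tendsto_atTop'.1 hcoltend W hW
      set k := max k0 N with hkdef
      have hjb := hwbot (k + 1)
      have hjt : w (x (k + 1)) ≤ ((-π (x (k + 1)) : ℝ) : EReal) :=
        martin_le_neg_pi hπ hwmartin _
      set s : ℝ := (w (x (k + 1))).toReal with hs
      have hwnb : w (x (k + 1)) ≠ ⊥ := by
        intro h
        rw [h] at hjb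
        exact (EReal.coe_ne_bot _) (le_bot_iff.1 hjb)
      have hsw : w (x (k + 1)) = (s : EReal) :=
        (EReal.coe_toReal (hjt.trans_lt (EReal.coe_lt_top _)).ne hwnb).symm
      have hslb : -π (x (k + 1)) + (β (k + 1) - b) ≤ s := by
        rw [hsw] at hjb
        exact EReal.coe_le_coe_iff.1 hjb
      have hW'n : {v : S → EReal | ((s - δ : ℝ) : EReal) < v (x (k + 1))} ∈ 𝓝 w :=
        (isOpen_lt continuous_const (continuous_apply _)).mem_nhds
          (by rw [Set.mem_setOf_eq, hsw, EReal.coe_lt_coe_iff]; linarith)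
      have hinf : ((c (k + 1) - c k + (s - δ) : ℝ) : EReal) ≤
          ⨅ (j : S) (_ : (fun i' => K A π i' j) ∈
            {v : S → EReal | ((s - δ : ℝ) : EReal) < v (x (k + 1))}), Kflat A π (x k) j := by
        refine le_iInf fun j => le_iInf fun hj => ?_
        have h1 : ((c (k + 1) - c k : ℝ) : EReal) ≤ plus A (x k) (x (k + 1)) := by
          rw [← hAedge k]
          exact single_edge _ _
        have h2 : ((s - δ : ℝ) : EReal) ≤ K A π (x (k + 1)) j := le_of_lt hj
        calc ((c (k + 1) - c k + (s - δ) : ℝ) : EReal)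
            = ((c (k + 1) - c k : ℝ) : EReal) + ((s - δ : ℝ) : EReal) := EReal.coe_add _ _
          _ ≤ plus A (x k) (x (k + 1)) + K A π (x (k + 1)) j := add_le_add h1 h2
          _ ≤ Kflat A π (x k) j := by
              rw [K, ereal_add_sub, Kflat]
              exact EReal.sub_le_sub plus_add_star_le le_rfl
      have hflatlb : ((c (k + 1) - c k + (s - δ) : ℝ) : EReal) ≤ flat A π w (x k) :=
        le_trans hinf (le_flat hW'n (x k))
      have hcolW : (fun i => K A π i (x k)) ∈ W := hN k (le_max_right _ _)
      have hterm : (r : EReal) ≤ (π (x k) : EReal) + flat A π w (x k) := by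
        have hreal : r ≤ π (x k) + (c (k + 1) - c k + (s - δ)) := by
          have hβk : b - δ ≤ β k := hk0 k (le_max_left _ _)
          have hβdef1 : β (k + 1) = π (x (k + 1)) - π (x 0) - c (k + 1) := rfl
          have hβdef2 : β k = π (x k) - π (x 0) - c k := rfl
          have : r = -2 * δ := by rw [hδdef]; ring
          nlinarith [hslb, hβk]
        calc (r : EReal) ≤ ((π (x k) + (c (k + 1) - c k + (s - δ)) : ℝ) : EReal) :=
              EReal.coe_le_coe_iff.2 hreal
          _ = (π (x k) : EReal) + ((c (k + 1) - c k + (s - δ) : ℝ) : EReal) := EReal.coe_add _ _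
          _ ≤ (π (x k) : EReal) + flat A π w (x k) := add_le_add_right hflatlb _
      have hsup : (r : EReal) ≤ ⨆ (j : S) (_ : (fun i => K A π i j) ∈ W),
          ((π j : EReal) + flat A π w j) :=
        le_trans hterm (le_iSup₂ (f := fun j (_ : (fun i => K A π i j) ∈ W) =>
          ((π j : EReal) + flat A π w j)) (x k) hcolW)
      exact absurd (hsup.trans_lt hsupr) (lt_irrefl _)
  refine ⟨w, hwmin, b, ?_, ?_⟩
  · intro i k
    exact hwge i k
  · intro W hW δ hδ
    obtain ⟨k0, hk0⟩ := hβnear δ hδ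
    obtain ⟨N, hN⟩ := (Filter.tendsto_atTop'.1 hcoltend W hW)
    exact ⟨max k0 N, hN _ (le_max_right _ _), hk0 _ (le_max_left _ _)⟩

theorem le_rep (hπ : LeftSuperharmonic A π) (hA : ∀ i j, A i j ≠ ⊤) {u : S → EReal}
    (hu : u ∈ Hset A π) (i : S) :
    u i ≤ ⨆ w ∈ martinMin A π, (mu A π u w + w i) := by
  classical
  rcases eq_or_ne (u i) ⊥ with hbot | hbot
  · rw [hbot]; exact bot_le
  have hui : u i = (((u i).toReal : ℝ) : EReal) := (EReal.coe_toReal (hu.1 i) hbot).symm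
  suffices h : ∀ ε : ℝ, 0 < ε →
      (((u i).toReal - 2 * ε : ℝ) : EReal) ≤ ⨆ w ∈ martinMin A π, (mu A π u w + w i) by
    by_contra hcon
    rcases EReal.lt_iff_exists_real_btwn.1 (not_le.1 hcon) with ⟨r, hsr, hru⟩
    have hr : r < (u i).toReal := by
      rw [hui] at hru
      exact EReal.coe_lt_coe_iff.1 hru
    have h2 := h (((u i).toReal - r) / 2) (by linarith)
    rw [show (u i).toReal - 2 * (((u i).toReal - r) / 2) = r by ring] at h2
    exact absurd (h2.trans_lt hsr) (lt_irrefl _)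
  intro ε hε
  -- step choice
  have hstep : ∀ (s : S), u s ≠ ⊥ → ∀ d : ℝ, 0 < d → ∃ t : S,
      u t ≠ ⊥ ∧ (((u s).toReal - d : ℝ) : EReal) ≤ A s t + u t := by
    intro s hs d hd
    have hlt : (((u s).toReal - d : ℝ) : EReal) < u s :=
      lt_of_lt_of_le (EReal.coe_lt_coe_iff.2 (sub_lt_self _ hd)) (EReal.coe_toReal_le hs)
    have hlt2 : (((u s).toReal - d : ℝ) : EReal) < ⨆ j, A s j + u j := by
      rw [hu.2.1 s]
      exact hlt
    rcases lt_iSup_iff.1 hlt2 with ⟨t, ht⟩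
    refine ⟨t, ?_, ht.le⟩
    intro hb
    rw [hb, EReal.add_bot] at ht
    exact absurd ht (not_lt_bot)
  choose fc hf1 hf2 using hstep
  let F : ℕ → {s : S // u s ≠ ⊥} := fun n =>
    Nat.rec (motive := fun _ => {s : S // u s ≠ ⊥}) ⟨i, hbot⟩
      (fun k p => ⟨fc p.1 p.2 (ε * (1/2)^(k+1)) (by positivity), hf1 _ _ _ _⟩) n
  set x : ℕ → S := fun k => (F k).1 with hxdef
  have hx0 : x 0 = i := rfl
  have hxnb : ∀ k, u (x k) ≠ ⊥ := fun k => (F k).2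
  have hxreal : ∀ k, u (x k) = (((u (x k)).toReal : ℝ) : EReal) :=
    fun k => (EReal.coe_toReal (hu.1 _) (hxnb k)).symm
  have hxsucc : ∀ k, (((u (x k)).toReal - ε * (1/2)^(k+1) : ℝ) : EReal) ≤
      A (x k) (x (k+1)) + u (x (k+1)) := fun k => hf2 ((F k).1) (F k).2 _ _
  -- cumulative bound
  have hbound : ∀ k, (((u i).toReal - ε * (1 - (1/2)^k) : ℝ) : EReal) ≤
      pathWeight A x k + u (x k) := by
    intro k
    induction k with
    | zero =>
      rw [pathWeight_zero, zero_add, hx0]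
      rw [show (u i).toReal - ε * (1 - (1/2 : ℝ)^0) = (u i).toReal by ring]
      exact le_of_eq hui.symm
    | succ k ih =>
      calc (((u i).toReal - ε * (1 - (1/2)^(k+1)) : ℝ) : EReal)
          = (((u i).toReal - ε * (1 - (1/2)^k) + (-(ε * (1/2)^(k+1))) : ℝ) : EReal) := by
            congr 1
            ring
        _ = (((u i).toReal - ε * (1 - (1/2)^k) : ℝ) : EReal) + ((-(ε * (1/2)^(k+1)) : ℝ) : EReal) :=
            EReal.coe_add _ _
        _ ≤ (pathWeight A x k + ((u (x k)).toReal : EReal)) + ((-(ε * (1/2)^(k+1)) : ℝ) : EReal) := by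
            refine add_le_add_left ?_ _
            rw [← hxreal k]
            exact ih
        _ = pathWeight A x k + (((u (x k)).toReal - ε * (1/2)^(k+1) : ℝ) : EReal) := by
            rw [ereal_add_coe_add_coe, sub_eq_add_neg]
        _ ≤ pathWeight A x k + (A (x k) (x (k+1)) + u (x (k+1))) :=
            add_le_add_right (hxsucc k) _
        _ = pathWeight A x (k+1) + u (x (k+1)) := by
            rw [pathWeight_succ, add_assoc]
  have hbound' : ∀ k, (((u i).toReal - ε : ℝ) : EReal) ≤ pathWeight A x k + u (x k) := by
    intro k
    refine le_trans (EReal.coe_le_coe_iff.2 ?_) (hbound k)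
    have h1 : (0:ℝ) ≤ (1/2:ℝ)^k := by positivity
    nlinarith
  -- path weights are real
  have hpwub : ∀ k, pathWeight A x k ≤ ((π (x k) - π i : ℝ) : EReal) := by
    intro k
    have h := pi_add_pathWeight_le hπ x k
    rw [hx0] at h
    rw [EReal.coe_sub]
    exact (EReal.le_sub_iff_add_le (Or.inl (EReal.coe_ne_bot _))
      (Or.inl (EReal.coe_ne_top _))).2 (by rwa [add_comm])
  have hpwlb : ∀ k, (((u i).toReal - ε - (u (x k)).toReal : ℝ) : EReal) ≤ pathWeight A x k := by
    intro k
    have h := hbound' k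
    rw [hxreal k] at h
    have hc := EReal.addLECancellable_coe ((u (x k)).toReal)
    refine hc ?_
    rw [← EReal.coe_add, show (u (x k)).toReal + ((u i).toReal - ε - (u (x k)).toReal)
      = (u i).toReal - ε by ring, add_comm (((u (x k)).toReal : ℝ) : EReal) (pathWeight A x k)]
    exact h
  -- path weights are real numbers
  have hpwreal : ∀ k, pathWeight A x k = (((pathWeight A x k).toReal : ℝ) : EReal) := by
    intro k
    refine (EReal.coe_toReal ((hpwub k).trans_lt (EReal.coe_lt_top _)).ne ?_).symm
    intro h
    have h2 := hpwlb k
    rw [h, le_bot_iff] at h2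
    exact EReal.coe_ne_bot _ h2
  -- integrability constant
  set Csup : EReal := ⨆ j, ((π j : EReal) + u j) with hCsup
  have hCnt : Csup ≠ ⊤ := hu.2.2.ne
  have hCnb : Csup ≠ ⊥ := by
    intro h
    have h1 : ((π i : EReal) + u i) ≤ Csup := le_iSup (fun j => (π j : EReal) + u j) i
    rw [h, le_bot_iff, hui, ← EReal.coe_add] at h1
    exact EReal.coe_ne_bot _ h1
  set C : ℝ := Csup.toReal with hCdef
  have hCeq : Csup = (C : EReal) := (EReal.coe_toReal hCnt hCnb).symm
  have hCub : ∀ k, π (x k) + (u (x k)).toReal ≤ C := by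
    intro k
    have h1 : ((π (x k) : EReal) + u (x k)) ≤ Csup := le_iSup (fun j => (π j : EReal) + u j) (x k)
    rw [hCeq, hxreal k, ← EReal.coe_add] at h1
    exact EReal.coe_le_coe_iff.1 h1
  set α : ℝ := C - (u i).toReal + ε - π i with hαdef
  have hgeo : ∀ k, (π (x k) : EReal) ≤ ((α : EReal) + (π (x 0) : EReal)) + pathWeight A x k := by
    intro k
    rw [hx0]
    calc (π (x k) : EReal) ≤ ((C - (u (x k)).toReal : ℝ) : EReal) :=
          EReal.coe_le_coe_iff.2 (by have := hCub k; linarith)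
      _ = ((α + π i : ℝ) : EReal) + (((u i).toReal - ε - (u (x k)).toReal : ℝ) : EReal) := by
          rw [← EReal.coe_add]
          congr 1
          rw [hαdef]
          ring
      _ ≤ ((α + π i : ℝ) : EReal) + pathWeight A x k := add_le_add_right (hpwlb k) _
      _ = ((α : EReal) + (π i : EReal)) + pathWeight A x k := by rw [EReal.coe_add]
  obtain ⟨w, hwmin, b, hwge, hsel⟩ := geodesic_limit hπ hgeo
  -- lower bound on w i
  have hwi : ((-π i - b : ℝ) : EReal) ≤ w i := by
    have h0 := hwge i 0
    rw [hx0, pathWeight_zero] at h0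
    refine le_trans ?_ h0
    rw [show (π i - π i - (0 : EReal).toReal - b : ℝ) = -b by simp]
    calc ((-π i - b : ℝ) : EReal) = ((-π i : ℝ) : EReal) + ((-b : ℝ) : EReal) := by
          rw [← EReal.coe_add, sub_eq_add_neg]
      _ ≤ K A π i i + ((-b : ℝ) : EReal) := add_le_add_left (neg_pi_le_K i) _
  -- lower bound on mu
  have hmu : ((π i + (u i).toReal - ε + (b - ε) : ℝ) : EReal) ≤ mu A π u w := by
    rw [mu]
    refine le_iInf fun W => le_iInf fun hW => ?_
    obtain ⟨k, hkW, hkβ⟩ := hsel W hW ε hε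
    have huxk : (u i).toReal - ε - (pathWeight A x k).toReal ≤ (u (x k)).toReal := by
      have h := hbound' k
      rw [hxreal k, hpwreal k, ← EReal.coe_add, EReal.coe_le_coe_iff] at h
      linarith
    have hterm : ((π i + (u i).toReal - ε + (b - ε) : ℝ) : EReal) ≤ (π (x k) : EReal) + u (x k) := by
      rw [hxreal k, ← EReal.coe_add]
      refine EReal.coe_le_coe_iff.2 ?_
      rw [hx0] at hkβ
      linarith
    exact le_trans hterm (le_iSup₂ (f := fun j (_ : (fun i' => K A π i' j) ∈ W) =>
      ((π j : EReal) + u j)) (x k) hkW)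
  have hfin : (((u i).toReal - 2 * ε : ℝ) : EReal) ≤ mu A π u w + w i := by
    calc (((u i).toReal - 2 * ε : ℝ) : EReal)
        = ((π i + (u i).toReal - ε + (b - ε) : ℝ) : EReal) + ((-π i - b : ℝ) : EReal) := by
          rw [← EReal.coe_add]
          congr 1
          ring
      _ ≤ mu A π u w + w i := add_le_add hmu hwi
  exact le_trans hfin (le_iSup₂ (f := fun w (_ : w ∈ martinMin A π) => mu A π u w + w i) w hwmin)

end Aux


/-- Poisson–Martin representation of harmonic vectors. For `u ∈ ℋ`:
(i) `u_i = sup_{w ∈ ℳᵐ} (μ_u(w) + w_i)`;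
(ii) any representing `ν : ℳᵐ → ℝ ∪ {−∞}` is bounded above and dominated by `μ_u`;
(iii) conversely any bounded above `ν` defines an element of `ℋ`. -/
theorem martin_representation_harmonic {S : Type*} (A : S → S → EReal)
    (hA : ∀ i j, A i j ≠ ⊤) (π : S → ℝ) (hπ : LeftSuperharmonic A π)
    (u : S → EReal) (hu : u ∈ Hset A π) :
    (∀ i, u i = ⨆ w ∈ martinMin A π, (mu A π u w + w i)) ∧
    (∀ ν : (S → EReal) → EReal, (∀ w, ν w ≠ ⊤) →
        (∀ i, u i = ⨆ w ∈ martinMin A π, (ν w + w i)) →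
        ((⨆ w ∈ martinMin A π, ν w) < ⊤ ∧
          ∀ w ∈ martinMin A π, ν w ≤ mu A π u w)) ∧
    (∀ ν : (S → EReal) → EReal, (∀ w, ν w ≠ ⊤) →
        (⨆ w ∈ martinMin A π, ν w) < ⊤ →
        (fun i => ⨆ w ∈ martinMin A π, (ν w + w i)) ∈ Hset A π) := by
  refine ⟨?_, ?_, ?_⟩
  · intro i
    refine le_antisymm (le_rep hπ hA hu i) (iSup₂_le fun w hw => ?_)
    have h := rep_le (π := π) (w := w) (fun i' => le_of_eq (hu.2.1 i')) i
    rwa [martinMin_flat_eq hπ hw i] at h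
  · intro ν hν hrep
    refine ⟨lt_of_le_of_lt (iSup₂_le fun w hw => ?_) hu.2.2, fun w hw => nu_le_mu hπ hrep hw⟩
    exact (nu_le_mu hπ hrep hw).trans mu_le_iSup
  · intro ν hν hνtop
    exact rep_harmonic hπ hA hνtop

end MaxPlus
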